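/- Let s, t, k be positive integers with k ≤ s, and let A_k ⊆ Σ^{s+k} be the set of strings x of length s+k for which there exists y with d_H(x,y) ≤ t and y_{[s]} = y_{k+[s]}. Then |A_k| ≥ q^k · ∑_{i=0}^{t} C(s, i)·(q−1)^i, where q = |Σ|. -/

import Mathlib

open scoped Classical
open Finset

lemma patt_card {S : Type*} [Fintype S] [DecidableEq S] (n : ℕ) (h : Fin n → S)
    (D : Finset (Fin n)) [Nonempty S] :
    (Finset.univ.filter fun g : Fin n → S => ∀ j, (g j ≠ h j ↔ j ∈ D)).card
      = (Fintype.card S - 1) ^ D.card := by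
  rw [← Fintype.card_subtype]
  rw [Fintype.card_congr (Equiv.subtypePiEquivPi (p := fun j v => v ≠ h j ↔ j ∈ D))]
  rw [Fintype.card_pi]
  have : ∀ j : Fin n, Fintype.card {v : S // v ≠ h j ↔ j ∈ D}
      = if j ∈ D then Fintype.card S - 1 else 1 := by
    intro j
    by_cases hj : j ∈ D
    · simp only [hj, if_true, iff_true]
      rw [Fintype.card_subtype_compl (p := fun v => v = h j), Fintype.card_subtype_eq]
    · simp only [hj, if_false, iff_false, not_not]
      exact Fintype.card_subtype_eq (h j)
  simp_rw [this]
  rw [Fintype.prod_ite_mem, Finset.prod_const]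

lemma sphere_card {S : Type*} [Fintype S] [DecidableEq S] [Nonempty S] (n i : ℕ) (h : Fin n → S) :
    (Finset.univ.filter fun g : Fin n → S => hammingDist g h = i).card
      = n.choose i * (Fintype.card S - 1) ^ i := by
  have hdecomp : (Finset.univ.filter fun g : Fin n → S => hammingDist g h = i)
      = (Finset.powersetCard i (Finset.univ : Finset (Fin n))).biUnion
        (fun D => Finset.univ.filter fun g : Fin n → S => ∀ j, (g j ≠ h j ↔ j ∈ D)) := by
    ext g
    simp only [Finset.mem_filter, Finset.mem_univ, true_and, Finset.mem_biUnion,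
      Finset.mem_powersetCard_univ]
    constructor
    · intro hg
      exact ⟨Finset.univ.filter fun j => g j ≠ h j, hg, fun j => by simp⟩
    · rintro ⟨D, hD, hgD⟩
      rw [← hD, hammingDist]
      congr 1
      ext j
      simp [hgD j]
  rw [hdecomp, Finset.card_biUnion]
  · rw [Finset.sum_congr rfl (fun D hD => patt_card n h D)]
    have : ∀ D ∈ Finset.powersetCard i (Finset.univ : Finset (Fin n)),
        (Fintype.card S - 1) ^ D.card = (Fintype.card S - 1) ^ i := by
      intro D hD
      rw [(Finset.mem_powersetCard_univ.mp hD)]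
    rw [Finset.sum_congr rfl this, Finset.sum_const, Finset.card_powersetCard,
      Finset.card_univ, Fintype.card_fin, smul_eq_mul]
  · intro D hD E hE hne
    simp only [Finset.disjoint_left, Finset.mem_filter, Finset.mem_univ, true_and]
    intro g hgD hgE
    apply hne
    ext j
    rw [← hgD j, hgE j]

lemma ball_card {S : Type*} [Fintype S] [DecidableEq S] [Nonempty S] (n t : ℕ) (h : Fin n → S) :
    (Finset.univ.filter fun g : Fin n → S => hammingDist g h ≤ t).card
      = ∑ i ∈ Finset.range (t + 1), n.choose i * (Fintype.card S - 1) ^ i := by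
  have : (Finset.univ.filter fun g : Fin n → S => hammingDist g h ≤ t)
      = (Finset.range (t + 1)).biUnion
        (fun i => Finset.univ.filter fun g : Fin n → S => hammingDist g h = i) := by
    ext g
    simp [Nat.lt_succ_iff]
  rw [this, Finset.card_biUnion]
  · exact Finset.sum_congr rfl fun i _ => sphere_card n i h
  · intro a ha b hb hne
    simp only [Finset.disjoint_left, Finset.mem_filter, Finset.mem_univ, true_and]
    intro g h1 h2
    exact hne (h1 ▸ h2 ▸ rfl)

/-- lower bound on the size of
`A_k = {x ∈ Σ^{s+k} : ∃ y, d_H(x,y) ≤ t and y has period k (y_{[s]} = y_{k+[s]})}`: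
`|A_k| ≥ q^k · ∑_{i=0}^{t} C(s,i)·(q-1)^i`. -/
theorem stmt11 {S : Type*} [Fintype S] [DecidableEq S]
    (s t k q : ℕ) (hq : q = Fintype.card S)
    (hs : 0 < s) (ht : 0 < t) (hk0 : 0 < k) (hk : k ≤ s) :
    q ^ k * ∑ i ∈ Finset.range (t + 1), Nat.choose s i * (q - 1) ^ i ≤
      (Finset.univ.filter (fun x : Fin (s + k) → S =>
        ∃ y : Fin (s + k) → S, hammingDist x y ≤ t ∧
          ∀ i, (hi : i < s) → y ⟨i, by omega⟩ = y ⟨k + i, by omega⟩)).card := by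
  subst hq
  -- center of the ball for each head `a`
  set c : (Fin k → S) → (Fin s → S) :=
    fun a j => a ⟨j.1 % k, Nat.mod_lt _ hk0⟩ with hc
  set Dom : Finset (Σ _ : Fin k → S, Fin s → S) :=
    Finset.univ.sigma (fun a => Finset.univ.filter fun g => hammingDist g (c a) ≤ t) with hDom
  have hcard : Dom.card = Fintype.card S ^ k *
      ∑ i ∈ Finset.range (t + 1), Nat.choose s i * (Fintype.card S - 1) ^ i := by
    rw [hDom, Finset.card_sigma]
    have : ∀ a ∈ (Finset.univ : Finset (Fin k → S)),
        (Finset.univ.filter fun g => hammingDist g (c a) ≤ t).card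
          = ∑ i ∈ Finset.range (t + 1), Nat.choose s i * (Fintype.card S - 1) ^ i := by
      intro a _
      have : Nonempty S := ⟨a ⟨0, hk0⟩⟩
      exact ball_card s t (c a)
    rw [Finset.sum_congr rfl this, Finset.sum_const, Finset.card_univ, smul_eq_mul,
      Fintype.card_fun, Fintype.card_fin]
  rw [← hcard]
  -- the injection
  set F : (Σ _ : Fin k → S, Fin s → S) → (Fin (s + k) → S) :=
    fun p i => if h : i.1 < k then p.1 ⟨i.1, h⟩ else p.2 ⟨i.1 - k, by omega⟩ with hF
  apply Finset.card_le_card_of_injOn F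
  · rintro ⟨a, g⟩ hp
    rw [hDom, Finset.mem_coe, Finset.mem_sigma] at hp
    obtain ⟨-, hg⟩ := hp
    rw [Finset.mem_filter] at hg
    replace hg := hg.2
    simp only [Finset.mem_coe, Finset.mem_filter, Finset.mem_univ, true_and]
    refine ⟨fun i => a ⟨i.1 % k, Nat.mod_lt _ hk0⟩, ?_, ?_⟩
    · -- hammingDist (F ⟨a,g⟩) y = hammingDist g (c a) ≤ t
      set y : Fin (s + k) → S := fun i => a ⟨i.1 % k, Nat.mod_lt _ hk0⟩ with hy
      have key : ∀ i : Fin (s + k), F ⟨a, g⟩ i ≠ y i → k ≤ i.1 := by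
        intro i hne
        by_contra hlt
        push_neg at hlt
        apply hne
        simp only [hF, hy, dif_pos hlt]
        congr 1
        exact Fin.ext (by simp [Nat.mod_eq_of_lt hlt])
      have keq : ∀ i : Fin (s + k), k ≤ i.1 →
          (F ⟨a, g⟩ i = g ⟨i.1 - k, by omega⟩ ∧ y i = c a ⟨i.1 - k, by omega⟩) := by
        intro i hki
        constructor
        · simp only [hF, dif_neg (by omega : ¬ i.1 < k)]
        · simp only [hy, hc]
          congr 1
          exact Fin.ext (by simpa using Nat.mod_eq_sub_mod hki)
      have hdist : hammingDist (F ⟨a, g⟩) y = hammingDist g (c a) := by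
        unfold hammingDist
        refine Finset.card_bij (fun i _ => (⟨i.1 - k, by omega⟩ : Fin s)) ?_ ?_ ?_
        · intro i hi
          simp only [Finset.mem_filter, Finset.mem_univ, true_and] at hi ⊢
          have hki := key i hi
          obtain ⟨h1, h2⟩ := keq i hki
          rw [← h1, ← h2]
          exact hi
        · intro i hi i' hi' hii
          simp only [Finset.mem_filter, Finset.mem_univ, true_and] at hi hi'
          have := key i hi
          have := key i' hi'
          exact Fin.ext (by have := congrArg Fin.val hii; simp at this; omega)
        · intro j hj
          simp only [Finset.mem_filter, Finset.mem_univ, true_and] at hj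
          refine ⟨⟨k + j.1, by omega⟩, ?_, Fin.ext (by simp)⟩
          simp only [Finset.mem_filter, Finset.mem_univ, true_and]
          obtain ⟨h1, h2⟩ := keq ⟨k + j.1, by omega⟩ (by simp)
          rw [h1, h2]
          have hjj : (⟨(⟨k + j.1, by omega⟩ : Fin (s + k)).1 - k, by omega⟩ : Fin s) = j :=
            Fin.ext (by simp)
          rw [hjj]
          exact hj
      rw [hdist]
      exact hg
    · intro i hi
      simp only
      congr 1
      exact Fin.ext (by simp [Nat.add_mod_left])
  · rintro ⟨a, g⟩ hp ⟨a', g'⟩ hp' heq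
    have ha : a = a' := by
      funext i
      have := congrFun heq ⟨i.1, by omega⟩
      simpa [hF, i.isLt, Fin.eta] using this
    subst ha
    have hg : g = g' := by
      funext j
      have := congrFun heq ⟨k + j.1, by omega⟩
      simp only [hF, dif_neg (by omega : ¬ k + j.1 < k)] at this
      have h2 : (⟨k + j.1 - k, by omega⟩ : Fin s) = j := Fin.ext (by simp)
      rwa [h2] at this
    rw [hg]
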